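/- arXiv:2209.09337 — 4 statements merged into one kernel-verified Lean document; each statement's English description precedes it below -/
import Mathlib

section
/- Let (Ω, 𝓕, P) be a probability space and let g : Ω → ℝ be measurable. For a sample set (ω₁, …, ω_N) ∈ Ω^N, define the scenario solution r*_N = max_{1 ≤ l ≤ N} g(ω_l) (the solution of the one-dimensional scenario program minimizing r subject to r ≥ g(ω_l) for all l), and define the violation probability V(r) = P[{ω ∈ Ω : g(ω) > r}]. Then for every ε ∈ [0,1], the product measure P^N of the set of sample tuples (ω₁, …, ω_N) ∈ Ω^N with V(r*_N) > ε is at most (1 − ε)^N. -/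
open MeasureTheory

/-- Scenario optimization bound in dimension `d = 1`: for the one-dimensional scenario
program `min r` subject to `r ≥ g ωₗ` for all sampled `ωₗ`, whose unique solution is
`r*_N = max_l g ωₗ`, the probability (under the `N`-fold product measure) that the
violation probability `V(r*_N) = P {ω | g ω > r*_N}` exceeds `ε` is at most `(1 - ε)^N`. -/
theorem scenario_opt_dim_one
    {Ω : Type*} [MeasurableSpace Ω] (P : Measure Ω) [IsProbabilityMeasure P]
    (g : Ω → ℝ) (hg : Measurable g)
    (N : ℕ) (hN : 0 < N) (ε : ℝ) (hε : ε ∈ Set.Icc (0 : ℝ) 1) :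
    (Measure.pi fun _ : Fin N => P)
      {ω : Fin N → Ω |
        P {x : Ω |
            g x >
              Finset.univ.sup'
                (Finset.univ_nonempty_iff.mpr (Fin.pos_iff_nonempty.mp hN))
                (fun l => g (ω l))} > ENNReal.ofReal ε}
      ≤ ENNReal.ofReal ((1 - ε) ^ N) := by
  obtain ⟨hε0, hε1⟩ := hε
  rcases eq_or_lt_of_le hε0 with h0 | h0
  · -- ε = 0 : bound is 1, trivial
    subst h0
    simp only [sub_zero, one_pow, ENNReal.ofReal_one]
    calc (Measure.pi fun _ : Fin N => P) _ ≤ (Measure.pi fun _ : Fin N => P) Set.univ :=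
          measure_mono (Set.subset_univ _)
      _ = 1 := measure_univ
  rcases eq_or_lt_of_le hε1 with h1 | h1
  · -- ε = 1 : event is empty
    subst h1
    have : {ω : Fin N → Ω |
        P {x : Ω | g x > Finset.univ.sup'
          (Finset.univ_nonempty_iff.mpr (Fin.pos_iff_nonempty.mp hN))
          (fun l => g (ω l))} > ENNReal.ofReal 1} = ∅ := by
      ext ω
      simp only [Set.mem_setOf_eq, Set.mem_empty_iff_false, iff_false, not_lt,
        ENNReal.ofReal_one]
      exact prob_le_one
    rw [this, measure_empty]
    exact zero_le
  -- main case 0 < ε < 1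
  set V : ℝ → ENNReal := fun t => P {x | g x > t} with hVdef
  have hVanti : Antitone V := fun s t hst =>
    measure_mono (fun x (hx : g x > t) => lt_of_le_of_lt hst hx)
  set S : Set ℝ := {t | V t ≤ ENNReal.ofReal ε} with hSdef
  have hεpos : (0 : ENNReal) < ENNReal.ofReal ε := ENNReal.ofReal_pos.2 h0
  have hεlt1 : ENNReal.ofReal ε < 1 := by
    rw [← ENNReal.ofReal_one]; exact ENNReal.ofReal_lt_ofReal_iff_of_nonneg hε0 |>.2 h1
  -- S is nonempty
  have hSne : S.Nonempty := by
    have hI : (⋂ n : ℕ, {x : Ω | g x > (n : ℝ)}) = ∅ := by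
      ext x
      simp only [Set.mem_iInter, Set.mem_setOf_eq, Set.mem_empty_iff_false, iff_false]
      push_neg
      obtain ⟨n, hn⟩ := exists_nat_gt (g x)
      exact ⟨n, hn.le⟩
    have htend : Filter.Tendsto (fun n : ℕ => V (n : ℝ)) Filter.atTop (nhds 0) := by
      have h := tendsto_measure_iInter_atTop (μ := P) (s := fun n : ℕ => {x : Ω | g x > (n : ℝ)})
        (fun n => ((measurableSet_Ioi (a := (n : ℝ))).preimage hg).nullMeasurableSet)
        (fun n m hnm => fun x (hx : g x > (m : ℝ)) => lt_of_le_of_lt (Nat.cast_le.2 hnm) hx)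
        ⟨0, measure_ne_top _ _⟩
      rwa [hI, measure_empty] at h
    obtain ⟨n, hn⟩ := (htend.eventually_lt_const hεpos).exists
    exact ⟨(n : ℝ), hn.le⟩
  -- S is bounded below
  have hSbdd : BddBelow S := by
    have hU : (⋃ n : ℕ, {x : Ω | g x > -(n : ℝ)}) = Set.univ := by
      ext x
      simp only [Set.mem_iUnion, Set.mem_setOf_eq, Set.mem_univ, iff_true]
      obtain ⟨n, hn⟩ := exists_nat_gt (-(g x))
      exact ⟨n, by linarith⟩
    have htend : Filter.Tendsto (fun n : ℕ => V (-(n : ℝ))) Filter.atTop (nhds 1) := by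
      have h := tendsto_measure_iUnion_atTop (μ := P) (s := fun n : ℕ => {x : Ω | g x > -(n : ℝ)})
        (fun n m hnm => fun x (hx : g x > -(n : ℝ)) =>
          lt_of_le_of_lt (neg_le_neg (Nat.cast_le.2 hnm)) hx)
      rwa [hU, measure_univ] at h
    obtain ⟨n, hn⟩ := (htend.eventually_const_lt hεlt1).exists
    refine ⟨-(n : ℝ), fun t ht => ?_⟩
    by_contra hlt
    push_neg at hlt
    exact absurd (le_trans (hVanti hlt.le) ht) (not_le.2 hn)
  set t₀ : ℝ := sInf S with ht₀
  -- V (t₀ + δ) ≤ ε for all δ > 0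
  have hupper : ∀ δ : ℝ, 0 < δ → V (t₀ + δ) ≤ ENNReal.ofReal ε := by
    intro δ hδ
    obtain ⟨s, hsS, hs⟩ := (csInf_lt_iff hSbdd hSne).1 (by linarith : sInf S < t₀ + δ)
    exact le_trans (hVanti hs.le) hsS
  -- V t₀ ≤ ε
  have hVt : V t₀ ≤ ENNReal.ofReal ε := by
    have hU : {x : Ω | g x > t₀} = ⋃ n : ℕ, {x : Ω | g x > t₀ + 1 / ((n : ℝ) + 1)} := by
      ext x
      simp only [Set.mem_setOf_eq, Set.mem_iUnion]
      constructor
      · intro hx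
        obtain ⟨n, hn⟩ := exists_nat_one_div_lt (show (0:ℝ) < g x - t₀ by linarith)
        exact ⟨n, by linarith⟩
      · rintro ⟨n, hn⟩
        have : (0:ℝ) < 1 / ((n : ℝ) + 1) := by positivity
        linarith
    have hmono : Monotone fun n : ℕ => {x : Ω | g x > t₀ + 1 / ((n : ℝ) + 1)} := by
      intro n m hnm x (hx : g x > t₀ + 1 / ((n : ℝ) + 1))
      have h1 : 1 / ((m : ℝ) + 1) ≤ 1 / ((n : ℝ) + 1) := by
        apply one_div_le_one_div_of_le (by positivity)
        have := (Nat.cast_le (α := ℝ)).2 hnm; linarith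
      exact lt_of_le_of_lt (by linarith) hx
    show P {x : Ω | g x > t₀} ≤ ENNReal.ofReal ε
    rw [hU, hmono.measure_iUnion]
    exact iSup_le fun n => hupper _ (by positivity)
  -- P {g < t₀} ≤ 1 - ε
  have hlow : P {x : Ω | g x < t₀} ≤ ENNReal.ofReal (1 - ε) := by
    have hU : {x : Ω | g x < t₀} = ⋃ n : ℕ, {x : Ω | g x ≤ t₀ - 1 / ((n : ℝ) + 1)} := by
      ext x
      simp only [Set.mem_setOf_eq, Set.mem_iUnion]
      constructor
      · intro hx
        obtain ⟨n, hn⟩ := exists_nat_one_div_lt (show (0:ℝ) < t₀ - g x by linarith)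
        exact ⟨n, by linarith⟩
      · rintro ⟨n, hn⟩
        have : (0:ℝ) < 1 / ((n : ℝ) + 1) := by positivity
        linarith
    have hmono : Monotone fun n : ℕ => {x : Ω | g x ≤ t₀ - 1 / ((n : ℝ) + 1)} := by
      intro n m hnm x (hx : g x ≤ t₀ - 1 / ((n : ℝ) + 1))
      have h1 : 1 / ((m : ℝ) + 1) ≤ 1 / ((n : ℝ) + 1) := by
        apply one_div_le_one_div_of_le (by positivity)
        have := (Nat.cast_le (α := ℝ)).2 hnm; linarith
      exact le_trans hx (by linarith)
    rw [hU, hmono.measure_iUnion]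
    refine iSup_le fun n => ?_
    set t : ℝ := t₀ - 1 / ((n : ℝ) + 1) with htdef
    have htlt : t < t₀ := by
      have : (0:ℝ) < 1 / ((n : ℝ) + 1) := by positivity
      simp only [htdef]; linarith
    have htnS : t ∉ S := fun hmem => absurd (csInf_le hSbdd hmem) (not_le.2 htlt)
    have hVgt : ENNReal.ofReal ε < V t := not_le.1 htnS
    have hcompl : P {x : Ω | g x ≤ t} + V t = 1 := by
      have hms : MeasurableSet {x : Ω | g x ≤ t} := (measurableSet_Iic (a := t)).preimage hg
      have := measure_add_measure_compl (μ := P) hms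
      have hc : {x : Ω | g x ≤ t}ᶜ = {x : Ω | g x > t} := by
        ext x; simp [not_le]
      rwa [hc, measure_univ] at this
    have : P {x : Ω | g x ≤ t} + ENNReal.ofReal ε ≤ 1 := by
      calc P {x : Ω | g x ≤ t} + ENNReal.ofReal ε
          ≤ P {x : Ω | g x ≤ t} + V t := add_le_add_right hVgt.le _
        _ = 1 := hcompl
    have hres : P {x : Ω | g x ≤ t} ≤ 1 - ENNReal.ofReal ε :=
      ENNReal.le_sub_of_add_le_right (by simp) this
    rwa [← ENNReal.ofReal_one, ← ENNReal.ofReal_sub 1 hε0] at hres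
  -- main inclusion
  set M : (Fin N → Ω) → ℝ := fun ω => Finset.univ.sup'
      (Finset.univ_nonempty_iff.mpr (Fin.pos_iff_nonempty.mp hN)) (fun l => g (ω l)) with hM
  have hincl : {ω : Fin N → Ω | P {x : Ω | g x > M ω} > ENNReal.ofReal ε}
      ⊆ Set.univ.pi (fun _ : Fin N => {x : Ω | g x < t₀}) := by
    intro ω hω
    have hMlt : M ω < t₀ := by
      by_contra hle
      push_neg at hle
      exact absurd (le_trans (hVanti hle) hVt) (not_le.2 hω)
    intro l _
    calc g (ω l) ≤ M ω := Finset.le_sup' (fun l => g (ω l)) (Finset.mem_univ l)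
      _ < t₀ := hMlt
  calc (Measure.pi fun _ : Fin N => P)
        {ω : Fin N → Ω | P {x : Ω | g x > M ω} > ENNReal.ofReal ε}
      ≤ (Measure.pi fun _ : Fin N => P)
        (Set.univ.pi (fun _ : Fin N => {x : Ω | g x < t₀})) := measure_mono hincl
    _ = ∏ _l : Fin N, P {x : Ω | g x < t₀} := Measure.pi_pi _ _
    _ = (P {x : Ω | g x < t₀}) ^ N := by simp [Finset.prod_const]
    _ ≤ (ENNReal.ofReal (1 - ε)) ^ N := pow_le_pow_left' hlow N
    _ = ENNReal.ofReal ((1 - ε) ^ N) := (ENNReal.ofReal_pow (by linarith) N).symm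
end

section
/- Let (Ω, 𝓕, P) be a probability space and let O : Ω → ℝ^n and F : Ω → ℝ^n be measurable maps. For a sample set (ω₁, …, ω_N) ∈ Ω^N, define the probabilistic sim2real gap γ*_N = max_{1 ≤ l ≤ N} ‖O(ω_l) − F(ω_l)‖. Then for every ε ∈ [0,1], the product measure P^N of the set of sample tuples (ω₁, …, ω_N) ∈ Ω^N satisfying P[{ω ∈ Ω : ‖O(ω) − F(ω)‖ ≤ γ*_N}] ≥ 1 − ε is at least 1 − (1 − ε)^N. In other words, with confidence at least 1 − (1 − ε)^N, the scenario gap γ*_N upper-bounds the gap ‖O(ω) − F(ω)‖ for a freshly sampled ω with probability at least 1 − ε. -/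
open MeasureTheory

lemma cdf_lt_measure_le {Ω : Type*} [MeasurableSpace Ω] (P : Measure Ω)
    [IsProbabilityMeasure P] (g : Ω → ℝ) (c : ENNReal) :
    P {x | P {y | g y ≤ g x} < c} ≤ c := by
  set φ : ℝ → ENNReal := fun t => P {y | g y ≤ t} with hφdef
  have hφ : Monotone φ := fun a b hab => measure_mono (fun y hy => le_trans hy hab)
  set S : Set ℝ := {t | φ t < c} with hSdef
  have hdown : ∀ {t s : ℝ}, s ∈ S → t ≤ s → t ∈ S := fun hs hts => lt_of_le_of_lt (hφ hts) hs
  have hA : {x | P {y | g y ≤ g x} < c} = g ⁻¹' S := rfl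
  rw [hA]
  rcases Set.eq_empty_or_nonempty S with hS | hS
  · simp [hS]
  by_cases hbdd : BddAbove S
  · set q := sSup S with hq
    by_cases hqS : q ∈ S
    · calc P (g ⁻¹' S) ≤ φ q := measure_mono (fun x hx => le_csSup hbdd hx)
        _ ≤ c := hqS.le
    · have hmono : Monotone (fun k : ℕ => {y | g y ≤ q - ((k:ℝ)+1)⁻¹}) := by
        intro a b hab y hy
        refine le_trans hy (sub_le_sub_left ?_ q)
        apply inv_anti₀ (by positivity)
        exact_mod_cast add_le_add_left (Nat.cast_le.mpr hab) 1
      have hsub : g ⁻¹' S ⊆ ⋃ k : ℕ, {y | g y ≤ q - ((k:ℝ)+1)⁻¹} := by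
        intro x hx
        have h1 : g x ≤ q := le_csSup hbdd hx
        have h2 : g x < q := lt_of_le_of_ne h1 (fun h => hqS (h ▸ hx))
        obtain ⟨k, hk⟩ := exists_nat_one_div_lt (sub_pos.mpr h2)
        refine Set.mem_iUnion.mpr ⟨k, ?_⟩
        rw [one_div] at hk
        simp only [Set.mem_setOf_eq]
        linarith
      calc P (g ⁻¹' S) ≤ P (⋃ k : ℕ, {y | g y ≤ q - ((k:ℝ)+1)⁻¹}) := measure_mono hsub
        _ = ⨆ k : ℕ, φ (q - ((k:ℝ)+1)⁻¹) := hmono.directed_le.measure_iUnion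
        _ ≤ c := by
            refine iSup_le fun k => le_of_lt ?_
            have hmem : q - ((k:ℝ)+1)⁻¹ ∈ S := by
              obtain ⟨s, hsS, hlt⟩ :=
                exists_lt_of_lt_csSup hS (sub_lt_self q (by positivity : (0:ℝ) < ((k:ℝ)+1)⁻¹))
              exact hdown hsS hlt.le
            exact hmem
  · have hSuniv : S = Set.univ := by
      ext t
      simp only [Set.mem_univ, iff_true]
      obtain ⟨s, hsS, hlt⟩ := not_bddAbove_iff.mp hbdd t
      exact hdown hsS hlt.le
    have h1 : P (g ⁻¹' S) = 1 := by rw [hSuniv]; simp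
    rw [h1]
    have hmono : Monotone (fun k : ℕ => {y | g y ≤ (k:ℝ)}) := by
      intro a b hab y hy
      exact le_trans hy (Nat.cast_le.mpr hab : (a:ℝ) ≤ b)
    have huniv : (Set.univ : Set Ω) = ⋃ k : ℕ, {y | g y ≤ (k:ℝ)} := by
      ext y; simp only [Set.mem_univ, true_iff, Set.mem_iUnion, Set.mem_setOf_eq]
      exact exists_nat_ge (g y)
    have h2 : (1 : ENNReal) = ⨆ k : ℕ, φ k := by
      rw [← measure_univ (μ := P), huniv]
      exact hmono.directed_le.measure_iUnion
    rw [h2]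
    refine iSup_le fun k => le_of_lt ?_
    show (k:ℝ) ∈ S
    rw [hSuniv]; trivial

/-- Probabilistic sim2real gap quantification (Theorem 2 of the paper): letting
`γ*_N = max_l ‖O ωₗ - F ωₗ‖` be the scenario solution computed from `N` i.i.d. samples,
with confidence at least `1 - (1 - ε)^N` (under the `N`-fold product measure) the gap
`‖O ω - F ω‖` of a freshly sampled `ω` is at most `γ*_N` with probability at least `1 - ε`. -/
theorem sim2real_gap_quantification
    {Ω : Type*} [MeasurableSpace Ω] (P : Measure Ω) [IsProbabilityMeasure P]
    (n : ℕ) (O F : Ω → EuclideanSpace ℝ (Fin n))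
    (hO : Measurable O) (hF : Measurable F)
    (N : ℕ) (hN : 0 < N) (ε : ℝ) (hε : ε ∈ Set.Icc (0 : ℝ) 1) :
    ENNReal.ofReal (1 - (1 - ε) ^ N) ≤
      (Measure.pi fun _ : Fin N => P)
        {ω : Fin N → Ω |
          P {x : Ω |
              ‖O x - F x‖ ≤
                Finset.univ.sup'
                  (Finset.univ_nonempty_iff.mpr (Fin.pos_iff_nonempty.mp hN))
                  (fun l => ‖O (ω l) - F (ω l)‖)}
            ≥ ENNReal.ofReal (1 - ε)} := by
  obtain ⟨hε0, hε1⟩ := hε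
  set g : Ω → ℝ := fun x => ‖O x - F x‖ with hgdef
  have hg : Measurable g := (hO.sub hF).norm
  set c : ENNReal := ENNReal.ofReal (1 - ε) with hc
  set φ : ℝ → ENNReal := fun t => P {y | g y ≤ t} with hφdef
  have hφ : Monotone φ := fun a b hab => measure_mono (fun y hy => le_trans hy hab)
  have hφmeas : Measurable φ := hφ.measurable
  set A : Set Ω := {x | φ (g x) < c} with hAdef
  have hAm : MeasurableSet A := (hφmeas.comp hg) measurableSet_Iio
  have hPA : P A ≤ c := cdf_lt_measure_le P g c
  set B : Set (Fin N → Ω) := Set.pi Set.univ (fun _ => A) with hBdef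
  have hBm : MeasurableSet B := MeasurableSet.pi Set.countable_univ (fun _ _ => hAm)
  set Pn := Measure.pi fun _ : Fin N => P with hPn
  have hsub : Bᶜ ⊆ {ω : Fin N → Ω |
      P {x : Ω | ‖O x - F x‖ ≤ Finset.univ.sup'
        (Finset.univ_nonempty_iff.mpr (Fin.pos_iff_nonempty.mp hN))
        (fun l => ‖O (ω l) - F (ω l)‖)} ≥ c} := by
    intro ω hω
    simp only [hBdef, Set.mem_compl_iff, Set.mem_pi, Set.mem_univ, forall_true_left,
      not_forall] at hω
    obtain ⟨l, hl⟩ := hω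
    have hcl : c ≤ φ (g (ω l)) := not_lt.mp hl
    have hsup : g (ω l) ≤ Finset.univ.sup'
        (Finset.univ_nonempty_iff.mpr (Fin.pos_iff_nonempty.mp hN))
        (fun l => ‖O (ω l) - F (ω l)‖) :=
      Finset.le_sup' (fun l => ‖O (ω l) - F (ω l)‖) (Finset.mem_univ l)
    exact le_trans hcl (hφ hsup)
  have hPB : Pn B = (P A) ^ N := by
    rw [hPn, hBdef, Measure.pi_pi]
    simp [Finset.prod_const]
  have key : Pn Bᶜ ≥ 1 - c ^ N := by
    rw [measure_compl hBm (measure_ne_top _ _), hPB, measure_univ]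
    exact tsub_le_tsub_left (pow_le_pow_left' hPA N) 1
  calc ENNReal.ofReal (1 - (1 - ε) ^ N)
      = 1 - c ^ N := by
        rw [hc, ← ENNReal.ofReal_pow (by linarith), ← ENNReal.ofReal_one,
          ← ENNReal.ofReal_sub _ (pow_nonneg (by linarith) N)]
    _ ≤ Pn Bᶜ := key
    _ ≤ _ := measure_mono hsub
end

section
/- Let (Ω, 𝓕, P) be a probability space and let O : Ω → ℝ^n and F : Ω → ℝ^n be measurable maps. For a sample set (ω₁, …, ω_N) ∈ Ω^N, define the probabilistic sim2real gap γ*_N = max_{1 ≤ l ≤ N} ‖O(ω_l) − F(ω_l)‖ and, for each ω ∈ Ω, the one-step reachable set R(ω) = {F(ω) + d : d ∈ ℝ^n, ‖d‖ ≤ γ*_N}, i.e., the closed ball of radius γ*_N centered at F(ω). Then for every ε ∈ [0,1], the product measure P^N of the set of sample tuples (ω₁, …, ω_N) ∈ Ω^N satisfying P[{ω ∈ Ω : O(ω) ∈ R(ω)}] ≥ 1 − ε is at least 1 − (1 − ε)^N. -/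
open MeasureTheory

lemma quantile_aux {Ω : Type*} [MeasurableSpace Ω] (P : Measure Ω) [IsProbabilityMeasure P]
    (g : Ω → ℝ) (hg : Measurable g) (c : ENNReal) :
    P {x | P {y | g y ≤ g x} < c} ≤ c := by
  set S : Set ℝ := {t | P {y | g y ≤ t} < c} with hS
  have hmono : ∀ {a b : ℝ}, a ≤ b → P {y | g y ≤ a} ≤ P {y | g y ≤ b} := by
    intro a b hab
    exact measure_mono (fun y hy => le_trans hy hab)
  have hlower : IsLowerSet S := by
    intro a b hba ha
    exact lt_of_le_of_lt (hmono hba) ha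
  have hB : {x | P {y | g y ≤ g x} < c} = g ⁻¹' S := rfl
  rcases Set.eq_empty_or_nonempty S with he | hne
  · rw [hB, he]; simp
  rcases Set.eq_empty_or_nonempty Sᶜ with hce | hcne
  · -- S = univ : every P {g ≤ t} < c, so 1 ≤ c
    have hSuniv : S = Set.univ := by
      rw [← Set.compl_empty_iff, hce]
    have h1 : (P Set.univ : ENNReal) ≤ c := by
      have huniv : (Set.univ : Set Ω) = ⋃ n : ℕ, {y | g y ≤ (n : ℝ)} := by
        ext y; simp only [Set.mem_univ, Set.mem_iUnion, true_iff]
        obtain ⟨n, hn⟩ := exists_nat_ge (g y)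
        exact ⟨n, hn⟩
      rw [huniv, Directed.measure_iUnion]
      · exact iSup_le fun n => le_of_lt (by have : (n : ℝ) ∈ S := hSuniv ▸ Set.mem_univ _; exact this)
      · apply Monotone.directed_le
        intro a b hab y hy
        simp only [Set.mem_setOf_eq] at hy ⊢
        exact le_trans hy (by exact_mod_cast hab)
    calc P {x | P {y | g y ≤ g x} < c} ≤ P Set.univ := measure_mono (Set.subset_univ _)
      _ ≤ c := h1
  · -- Sᶜ nonempty
    have hbdd : BddBelow Sᶜ := by
      obtain ⟨a, ha⟩ := hne
      exact ⟨a, fun u hu => by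
        by_contra h
        exact hu (hlower (le_of_lt (not_le.mp h)) ha)⟩
    set s := sInf Sᶜ with hs
    have hgx_le : ∀ x, g x ∈ S → g x ≤ s := by
      intro x hx
      apply le_csInf hcne
      intro u hu
      by_contra h
      exact hu (hlower (le_of_lt (not_le.mp h)) hx)
    by_cases hsS : s ∈ S
    · calc P {x | P {y | g y ≤ g x} < c} ≤ P {y | g y ≤ s} :=
            measure_mono (fun x hx => hgx_le x hx)
        _ ≤ c := le_of_lt hsS
    · have hsub : {x | P {y | g y ≤ g x} < c} ⊆ {y | g y < s} := by
        intro x hx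
        rcases lt_or_eq_of_le (hgx_le x hx) with h | h
        · exact h
        · exact absurd (h ▸ hx : s ∈ S) hsS
      have hun : {y | g y < s} = ⋃ n : ℕ, {y | g y ≤ s - 1/(n+1)} := by
        ext y
        simp only [Set.mem_setOf_eq, Set.mem_iUnion]
        constructor
        · intro h
          obtain ⟨n, hn⟩ := exists_nat_one_div_lt (sub_pos.mpr h)
          exact ⟨n, by push_cast at hn ⊢; linarith⟩
        · rintro ⟨n, hn⟩
          have : (0:ℝ) < 1/(n+1) := by positivity
          linarith
      have hmem : ∀ n : ℕ, (s - 1/(n+1) : ℝ) ∈ S := by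
        intro n
        by_contra h
        have := csInf_le hbdd (h : s - 1/(n+1) ∈ Sᶜ)
        have hp : (0:ℝ) < 1/(n+1) := by positivity
        rw [← hs] at this
        linarith
      calc P {x | P {y | g y ≤ g x} < c} ≤ P {y | g y < s} := measure_mono hsub
        _ = ⨆ n : ℕ, P {y | g y ≤ s - 1/(n+1)} := by
            rw [hun, Directed.measure_iUnion]
            apply Monotone.directed_le
            intro a b hab y hy
            simp only [Set.mem_setOf_eq] at *
            have : (1:ℝ)/(b+1) ≤ 1/(a+1) := by
              apply one_div_le_one_div_of_le
              · positivity
              · have : (a:ℝ) ≤ b := by exact_mod_cast hab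
                linarith
            linarith
        _ ≤ c := iSup_le fun n => le_of_lt (hmem n)

/-- Uncertain-model accuracy (Corollary 1 of the paper): letting
`γ*_N = max_l ‖O ωₗ - F ωₗ‖` and `R(ω) = {F ω + d : ‖d‖ ≤ γ*_N}` the one-step reachable
set of the uncertain model, with confidence at least `1 - (1 - ε)^N` the observed
evolution `O ω` of a freshly sampled `ω` lies in `R(ω)` with probability at least `1 - ε`. -/
theorem uncertain_model_accuracy
    {Ω : Type*} [MeasurableSpace Ω] (P : Measure Ω) [IsProbabilityMeasure P]
    (n : ℕ) (O F : Ω → EuclideanSpace ℝ (Fin n))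
    (hO : Measurable O) (hF : Measurable F)
    (N : ℕ) (hN : 0 < N) (ε : ℝ) (hε : ε ∈ Set.Icc (0 : ℝ) 1) :
    ENNReal.ofReal (1 - (1 - ε) ^ N) ≤
      (Measure.pi fun _ : Fin N => P)
        {ω : Fin N → Ω |
          P {x : Ω |
              O x ∈
                {y : EuclideanSpace ℝ (Fin n) |
                  ∃ d : EuclideanSpace ℝ (Fin n),
                    ‖d‖ ≤
                      Finset.univ.sup'
                        (Finset.univ_nonempty_iff.mpr (Fin.pos_iff_nonempty.mp hN))
                        (fun l => ‖O (ω l) - F (ω l)‖) ∧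
                    y = F x + d}}
            ≥ ENNReal.ofReal (1 - ε)} := by
  set g : Ω → ℝ := fun x => ‖O x - F x‖ with hgdef
  have hg : Measurable g := (hO.sub hF).norm
  set c : ENNReal := ENNReal.ofReal (1 - ε) with hc
  set S : Set ℝ := {t | P {y | g y ≤ t} < c} with hS
  have hlower : IsLowerSet S := fun a b hba ha =>
    lt_of_le_of_lt (measure_mono fun y hy => le_trans hy hba) ha
  have hSmeas : MeasurableSet S := hlower.ordConnected.measurableSet
  have hBmeas : MeasurableSet (g ⁻¹' S) := hg hSmeas
  have hPB : P (g ⁻¹' S) ≤ c := quantile_aux P g hg c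
  set box : Set (Fin N → Ω) := Set.univ.pi (fun _ : Fin N => g ⁻¹' S) with hbox
  have hboxmeas : MeasurableSet box := MeasurableSet.univ_pi fun _ => hBmeas
  have hsubset : boxᶜ ⊆
      {ω : Fin N → Ω |
          P {x : Ω |
              O x ∈
                {y : EuclideanSpace ℝ (Fin n) |
                  ∃ d : EuclideanSpace ℝ (Fin n),
                    ‖d‖ ≤
                      Finset.univ.sup'
                        (Finset.univ_nonempty_iff.mpr (Fin.pos_iff_nonempty.mp hN))
                        (fun l => ‖O (ω l) - F (ω l)‖) ∧
                    y = F x + d}}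
            ≥ c} := by
    intro ω hω
    simp only [hbox, Set.mem_compl_iff, Set.mem_pi, Set.mem_univ, forall_true_left,
      not_forall] at hω
    obtain ⟨l, hl⟩ := hω
    have hl' : c ≤ P {y | g y ≤ g (ω l)} := not_lt.mp hl
    refine le_trans hl' (measure_mono ?_)
    intro x hx
    refine ⟨O x - F x, ?_, by abel⟩
    exact le_trans hx (Finset.le_sup' (fun l => ‖O (ω l) - F (ω l)‖) (Finset.mem_univ l))
  have hpi : (Measure.pi fun _ : Fin N => P) box = (P (g ⁻¹' S)) ^ N := by
    rw [hbox, Measure.pi_pi, Finset.prod_const, Finset.card_univ, Fintype.card_fin]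
  have hcompl : (Measure.pi fun _ : Fin N => P) boxᶜ = 1 - (P (g ⁻¹' S)) ^ N := by
    rw [measure_compl hboxmeas (measure_ne_top _ _), hpi, measure_univ]
  calc ENNReal.ofReal (1 - (1 - ε) ^ N)
      = 1 - ENNReal.ofReal ((1 - ε) ^ N) := by
        rw [ENNReal.ofReal_sub _ (pow_nonneg (sub_nonneg.mpr hε.2) N), ENNReal.ofReal_one]
    _ ≤ 1 - (P (g ⁻¹' S)) ^ N := by
        apply tsub_le_tsub_left
        rw [ENNReal.ofReal_pow (sub_nonneg.mpr hε.2)]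
        exact pow_le_pow_left' hPB N
    _ = (Measure.pi fun _ : Fin N => P) boxᶜ := hcompl.symm
    _ ≤ _ := measure_mono hsubset
end

section
/- Let (Ω, 𝓕, P) be a probability space and let s : Ω → ℝ be a measurable function (the safety value of a sampled closed-loop trajectory). For a sample set (ω₁, …, ω_N) ∈ Ω^N, define the minimum sampled safety value s*_N = min_{1 ≤ i ≤ N} s(ω_i). Then for every ε ∈ [0,1], the product measure P^N of the set of sample tuples (ω₁, …, ω_N) ∈ Ω^N satisfying P[{ω ∈ Ω : s(ω) ≥ s*_N}] ≥ 1 − ε is at least 1 − (1 − ε)^N. In other words, with confidence at least 1 − (1 − ε)^N, a freshly sampled safety value is at least s*_N with probability at least 1 − ε. -/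
open MeasureTheory

/-- Safety-critical controller verification (Corollary 2 of the paper): letting
`s*_N = min_i s ωᵢ` be the minimum safety value over `N` i.i.d. sampled trajectories,
with confidence at least `1 - (1 - ε)^N` a freshly sampled safety value `s ω`
is at least `s*_N` with probability at least `1 - ε`. -/
theorem controller_verification
    {Ω : Type*} [MeasurableSpace Ω] (P : Measure Ω) [IsProbabilityMeasure P]
    (s : Ω → ℝ) (hs : Measurable s)
    (N : ℕ) (hN : 0 < N) (ε : ℝ) (hε : ε ∈ Set.Icc (0 : ℝ) 1) :
    ENNReal.ofReal (1 - (1 - ε) ^ N) ≤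
      (Measure.pi fun _ : Fin N => P)
        {ω : Fin N → Ω |
          P {x : Ω |
              s x ≥
                Finset.univ.inf'
                  (Finset.univ_nonempty_iff.mpr (Fin.pos_iff_nonempty.mp hN))
                  (fun i => s (ω i))}
            ≥ ENNReal.ofReal (1 - ε)} := by
  obtain ⟨hε0, hε1⟩ := hε
  have h1ε : (0:ℝ) ≤ 1 - ε := by linarith
  set c : ENNReal := ENNReal.ofReal (1 - ε) with hc
  set g : ℝ → ENNReal := fun t => P {x | s x ≥ t} with hg
  have hganti : Antitone g := fun t t' h =>
    measure_mono (fun x hx => le_trans h hx)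
  set C : Set Ω := {y | g (s y) < c} with hCdef
  -- key bound: P C ≤ c
  have hC : P C ≤ c := by
    set U : Set ℝ := {t | g t < c} with hU
    rcases Set.eq_empty_or_nonempty U with h | hne
    · have : C = ∅ := by
        ext y; simp only [hCdef, Set.mem_setOf_eq, Set.mem_empty_iff_false, iff_false]
        intro hy
        exact Set.eq_empty_iff_forall_notMem.mp h (s y) hy
      simp [this]
    by_cases hbdd : BddBelow U
    · set a := sInf U with ha
      by_cases haU : a ∈ U
      · calc P C ≤ g a := measure_mono (fun y hy => csInf_le hbdd hy)
          _ ≤ c := le_of_lt haU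
      · have hsub : C ⊆ ⋃ n : ℕ, {x | s x ≥ a + 1/(n+1)} := by
          intro y hy
          have hyU : s y ∈ U := hy
          have h1 : a < s y := lt_of_le_of_ne (csInf_le hbdd hyU)
            (fun e => haU (e ▸ hyU))
          obtain ⟨n, hn⟩ := exists_nat_one_div_lt (sub_pos.mpr h1)
          exact Set.mem_iUnion.mpr ⟨n, by
            simp only [Set.mem_setOf_eq, ge_iff_le]
            push_cast at hn ⊢
            linarith⟩
        have hdir : Directed (· ⊆ ·) (fun n : ℕ => {x | s x ≥ a + 1/(n+1)}) := by
          apply Monotone.directed_le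
          intro n m hnm x hx
          have hnm' : (n:ℝ) ≤ m := Nat.cast_le.mpr hnm
          have hle : (1:ℝ)/(m+1) ≤ 1/(n+1) := by
            apply one_div_le_one_div_of_le
            · positivity
            · linarith
          simp only [Set.mem_setOf_eq, ge_iff_le] at hx ⊢
          linarith
        have hmem : ∀ n : ℕ, g (a + 1/(n+1)) < c := by
          intro n
          have hlt : a < a + 1/(n+1) := by
            have : (0:ℝ) < 1/((n:ℝ)+1) := by positivity
            linarith
          obtain ⟨u, huU, hu⟩ := exists_lt_of_csInf_lt hne hlt
          exact lt_of_le_of_lt (hganti (le_of_lt hu)) huU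
        calc P C ≤ P (⋃ n : ℕ, {x | s x ≥ a + 1/(n+1)}) := measure_mono hsub
          _ = ⨆ n : ℕ, g (a + 1/(n+1)) := hdir.measure_iUnion
          _ ≤ c := iSup_le fun n => le_of_lt (hmem n)
    · -- U unbounded below: every real is in U, so P univ ≤ c
      have hmem : ∀ n : ℕ, g (-(n:ℝ)) < c := by
        intro n
        obtain ⟨u, huU, hu⟩ := not_bddBelow_iff.mp hbdd (-(n:ℝ))
        exact lt_of_le_of_lt (hganti (le_of_lt hu)) huU
      have hcover : (Set.univ : Set Ω) ⊆ ⋃ n : ℕ, {x | s x ≥ -(n:ℝ)} := by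
        intro y _
        obtain ⟨n, hn⟩ := exists_nat_ge (-(s y))
        exact Set.mem_iUnion.mpr ⟨n, by simp only [Set.mem_setOf_eq, ge_iff_le]; linarith⟩
      have hdir : Directed (· ⊆ ·) (fun n : ℕ => {x | s x ≥ -(n:ℝ)}) := by
        apply Monotone.directed_le
        intro n m hnm x hx
        have : -(m:ℝ) ≤ -(n:ℝ) := by
          simp only [neg_le_neg_iff]; exact_mod_cast hnm
        exact le_trans this hx
      calc P C ≤ P Set.univ := measure_mono (Set.subset_univ _)
        _ ≤ P (⋃ n : ℕ, {x | s x ≥ -(n:ℝ)}) := measure_mono hcover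
        _ = ⨆ n : ℕ, g (-(n:ℝ)) := hdir.measure_iUnion
        _ ≤ c := iSup_le fun n => le_of_lt (hmem n)
  set μ := Measure.pi fun _ : Fin N => P with hμ
  set S : Set (Fin N → Ω) :=
    {ω : Fin N → Ω |
      P {x : Ω | s x ≥ Finset.univ.inf'
          (Finset.univ_nonempty_iff.mpr (Fin.pos_iff_nonempty.mp hN))
          (fun i => s (ω i))} ≥ c} with hS
  -- bound the complement
  have hcompl : Sᶜ ⊆ Set.pi Set.univ (fun _ : Fin N => toMeasurable P C) := by
    intro ω hω
    have hω' : g (Finset.univ.inf'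
        (Finset.univ_nonempty_iff.mpr (Fin.pos_iff_nonempty.mp hN))
        (fun i => s (ω i))) < c := not_le.mp hω
    intro i _
    apply subset_toMeasurable
    exact lt_of_le_of_lt (hganti (Finset.inf'_le _ (Finset.mem_univ i))) hω'
  have hScompl : μ Sᶜ ≤ c ^ N := by
    calc μ Sᶜ ≤ μ (Set.pi Set.univ (fun _ : Fin N => toMeasurable P C)) :=
          measure_mono hcompl
      _ = ∏ _i : Fin N, P (toMeasurable P C) := Measure.pi_pi _ _
      _ = P (toMeasurable P C) ^ N := by
          rw [Finset.prod_const, Finset.card_univ, Fintype.card_fin]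
      _ = P C ^ N := by rw [measure_toMeasurable]
      _ ≤ c ^ N := pow_le_pow_left' hC N
  have hunion : (1 : ENNReal) ≤ μ S + μ Sᶜ := by
    have := measure_union_le (μ := μ) S Sᶜ
    rwa [Set.union_compl_self, measure_univ] at this
  have hfinal : (1 : ENNReal) - c ^ N ≤ μ S := by
    rw [tsub_le_iff_right]
    exact le_trans hunion (add_le_add_right hScompl _)
  refine le_trans ?_ hfinal
  have hpow : c ^ N = ENNReal.ofReal ((1 - ε) ^ N) := (ENNReal.ofReal_pow h1ε N).symm
  rw [hpow, ← ENNReal.ofReal_one, ← ENNReal.ofReal_sub _ (pow_nonneg h1ε N)]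
end
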